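/- Let N ≥ 1 and let H_i : ℝ^{d+1} → ℝ (i = 1,…,N) be quasiconvex, coercive, C², and satisfy: H_i attains its minimum at a unique point P_i^0, the Hessian D²H_i(P_i^0) is positive definite, ∇H_i(P) ≠ 0 for every P ≠ P_i^0, and for every P ≠ P_i^0 and every nonzero vector v orthogonal to ∇H_i(P) one has D²H_i(P)(v,v) > 0. Then there exist δ > 0 and a convex C² function β : ℝ → ℝ with β'(λ) ≥ δ for all λ ∈ ℝ, such that for every i = 1,…,N the composition β ∘ H_i is C² with everywhere positive definite Hessian and is superlinear (i.e. (β∘H_i)(P)/|P| → +∞ as |P| → +∞). -/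

import Mathlib

open scoped Topology
noncomputable section


lemma sqmax_hasDerivAt (t : ℝ) :
    HasDerivAt (fun s : ℝ => max s 0 ^ 2) (2 * max t 0) t := by
  rcases lt_trichotomy t 0 with ht | rfl | ht
  · have h : (fun s : ℝ => max s 0 ^ 2) =ᶠ[𝓝 t] fun _ => (0:ℝ) := by
      filter_upwards [Iio_mem_nhds ht] with s hs
      simp [max_eq_right (le_of_lt (Set.mem_Iio.mp hs))]
    have := (hasDerivAt_const t (0:ℝ)).congr_of_eventuallyEq h
    simpa [max_eq_right ht.le] using this
  · rw [hasDerivAt_iff_tendsto_slope]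
    have hb : ∀ s : ℝ, s ≠ 0 → |slope (fun s : ℝ => max s 0 ^ 2) 0 s| ≤ |s| := by
      intro s hs
      rcases le_or_gt s 0 with h | h
      · simp [slope, max_eq_right h, hs]
      · simp only [slope, max_eq_left h.le, max_self, vsub_eq_sub, smul_eq_mul]
        have hval : (s - 0)⁻¹ * (s ^ 2 - 0 ^ 2) = s := by
          field_simp; ring
        rw [hval]
    have habs : Filter.Tendsto (fun s : ℝ => |s|) (𝓝[≠] (0:ℝ)) (𝓝 0) := by
      have := (continuous_abs.tendsto (0:ℝ)).mono_left
        (nhdsWithin_le_nhds : 𝓝[≠] (0:ℝ) ≤ 𝓝 0)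
      simpa using this
    simp only [max_self]
    rw [show (2 : ℝ) * 0 = 0 by ring]
    apply squeeze_zero_norm _ habs
    intro s
    rcases eq_or_ne s 0 with rfl | hs
    · simp [slope]
    · simpa using hb s hs
  · have h : (fun s : ℝ => max s 0 ^ 2) =ᶠ[𝓝 t] fun s => s ^ 2 := by
      filter_upwards [Ioi_mem_nhds ht] with s hs
      simp [max_eq_left (le_of_lt (Set.mem_Ioi.mp hs))]
    have h2 : HasDerivAt (fun s : ℝ => s ^ 2) (2 * t) t := by
      simpa using (hasDerivAt_pow 2 t)
    have := h2.congr_of_eventuallyEq h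
    simpa [max_eq_left ht.le] using this

lemma sqmax_contDiff : ContDiff ℝ 1 (fun s : ℝ => max s 0 ^ 2) := by
  rw [contDiff_one_iff_deriv]
  have hd : deriv (fun s : ℝ => max s 0 ^ 2) = fun t => 2 * max t 0 :=
    funext fun t => (sqmax_hasDerivAt t).deriv
  refine ⟨fun t => (sqmax_hasDerivAt t).differentiableAt, ?_⟩
  rw [hd]
  exact continuous_const.mul (continuous_id.max continuous_const)

lemma sqmax_mono : Monotone (fun s : ℝ => max s 0 ^ 2) := fun _ _ hab =>
  pow_le_pow_left₀ (le_max_right _ _) (max_le_max hab le_rfl) 2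

lemma sqmax_nonneg (s : ℝ) : 0 ≤ max s 0 ^ 2 := sq_nonneg _
section Beta

variable (m : ℝ) (d : ℕ → ℝ)

def Gfun (n : ℕ) (x : ℝ) : ℝ := ∑ j ∈ Finset.range n, d j * max (x - m + 1 - j) 0 ^ 2

def gfun (x : ℝ) : ℝ := Gfun m d ⌈x - m + 1⌉₊ x

def gamfun (n : ℕ) (x : ℝ) : ℝ := ∑ j ∈ Finset.range n, d j * (2 * max (x - m + 1 - j) 0)

def gamg (x : ℝ) : ℝ := gamfun m d ⌈x - m + 1⌉₊ x

lemma Gfun_eq {a b : ℕ} (x : ℝ) (ha : x - m + 1 ≤ a) (hab : a ≤ b) :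
    Gfun m d b x = Gfun m d a x := by
  rw [Gfun, Gfun, ← Finset.sum_subset (Finset.range_subset_range.mpr hab)]
  intro j hj hja
  have hj' : (a : ℝ) ≤ j := by
    exact_mod_cast Nat.le_of_not_lt (fun h => hja (Finset.mem_range.mpr h))
  have : x - m + 1 - j ≤ 0 := by linarith
  simp [max_eq_right this]

lemma gamfun_eq {a b : ℕ} (x : ℝ) (ha : x - m + 1 ≤ a) (hab : a ≤ b) :
    gamfun m d b x = gamfun m d a x := by
  rw [gamfun, gamfun, ← Finset.sum_subset (Finset.range_subset_range.mpr hab)]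
  intro j hj hja
  have hj' : (a : ℝ) ≤ j := by
    exact_mod_cast Nat.le_of_not_lt (fun h => hja (Finset.mem_range.mpr h))
  have : x - m + 1 - j ≤ 0 := by linarith
  simp [max_eq_right this]

lemma gfun_eq (x : ℝ) {n : ℕ} (hn : x - m + 1 ≤ n) : gfun m d x = Gfun m d n x := by
  have hc : x - m + 1 ≤ (⌈x - m + 1⌉₊ : ℝ) := Nat.le_ceil _
  rw [gfun, ← Gfun_eq m d x hc (le_max_right n _), ← Gfun_eq m d x hn (le_max_left n _)]

lemma gamg_eq (x : ℝ) {n : ℕ} (hn : x - m + 1 ≤ n) : gamg m d x = gamfun m d n x := by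
  have hc : x - m + 1 ≤ (⌈x - m + 1⌉₊ : ℝ) := Nat.le_ceil _
  rw [gamg, ← gamfun_eq m d x hc (le_max_right n _), ← gamfun_eq m d x hn (le_max_left n _)]

lemma Gfun_hasDerivAt (n : ℕ) (x : ℝ) :
    HasDerivAt (Gfun m d n) (gamfun m d n x) x := by
  rw [show gamfun m d n x = ∑ j ∈ Finset.range n, d j * (2 * max (x - m + 1 - j) 0) from rfl]
  apply HasDerivAt.fun_sum
  intro j _
  have haff : HasDerivAt (fun y : ℝ => y - m + 1 - j) 1 x := by
    have h := ((hasDerivAt_id x).sub_const m).add_const (1 - (j:ℝ))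
    have heq : (fun y : ℝ => id y - m + (1 - (j:ℝ))) = fun y : ℝ => y - m + 1 - j := by
      funext y; simp [id]; ring
    rwa [heq] at h
  have h1 := (sqmax_hasDerivAt (x - m + 1 - j)).comp x haff
  have h2 := h1.const_mul (d j)
  have : d j * (2 * max (x - m + 1 - (j:ℝ)) 0 * 1) = d j * (2 * max (x - m + 1 - j) 0) := by
    ring
  rw [this] at h2
  exact h2.congr_of_eventuallyEq (by rfl)

lemma gfun_eventuallyEq (x : ℝ) :
    gfun m d =ᶠ[𝓝 x] Gfun m d ⌈x - m + 2⌉₊ := by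
  filter_upwards [Metric.ball_mem_nhds x one_pos] with y hy
  have : |y - x| < 1 := by simpa [Real.dist_eq] using hy
  have h1 : y - m + 1 ≤ x - m + 2 := by
    have := abs_lt.mp this
    linarith [this.2]
  exact gfun_eq m d y (h1.trans (Nat.le_ceil _))

lemma gfun_hasDerivAt (x : ℝ) : HasDerivAt (gfun m d) (gamg m d x) x := by
  have h1 : x - m + 1 ≤ (⌈x - m + 2⌉₊ : ℝ) := le_trans (by linarith) (Nat.le_ceil _)
  have := (Gfun_hasDerivAt m d ⌈x - m + 2⌉₊ x).congr_of_eventuallyEq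
    (gfun_eventuallyEq m d x)
  rwa [← gamg_eq m d x h1] at this

lemma gfun_contDiff : ContDiff ℝ 1 (gfun m d) := by
  rw [contDiff_iff_contDiffAt]
  intro x
  have hG : ContDiff ℝ 1 (Gfun m d ⌈x - m + 2⌉₊) := by
    apply ContDiff.sum
    intro j _
    have haff : ContDiff ℝ 1 (fun y : ℝ => y - m + 1 - j) := by
      apply ContDiff.sub _ contDiff_const
      exact (contDiff_id.sub contDiff_const).add contDiff_const
    exact contDiff_const.mul (sqmax_contDiff.comp haff)
  exact hG.contDiffAt.congr_of_eventuallyEq (gfun_eventuallyEq m d x)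

variable (hd : ∀ j, 0 ≤ d j)

include hd

lemma gfun_nonneg (x : ℝ) : 0 ≤ gfun m d x := by
  rw [gfun, Gfun]
  apply Finset.sum_nonneg
  intro j _
  exact mul_nonneg (hd j) (sq_nonneg _)

lemma gfun_lb (x : ℝ) (j : ℕ) : d j * max (x - m + 1 - j) 0 ^ 2 ≤ gfun m d x := by
  have hn : x - m + 1 ≤ (max (j+1) ⌈x - m + 1⌉₊ : ℕ) := by
    calc x - m + 1 ≤ (⌈x - m + 1⌉₊ : ℝ) := Nat.le_ceil _
    _ ≤ _ := by exact_mod_cast Nat.le_max_right (j+1) _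
  rw [gfun_eq m d x hn, Gfun]
  apply Finset.single_le_sum (f := fun j => d j * max (x - m + 1 - j) 0 ^ 2)
  · intro i _
    exact mul_nonneg (hd i) (sq_nonneg _)
  · exact Finset.mem_range.mpr (lt_of_lt_of_le (Nat.lt_succ_self j) (Nat.le_max_left _ _))

lemma gamg_nonneg (x : ℝ) : 0 ≤ gamg m d x := by
  rw [gamg, gamfun]
  apply Finset.sum_nonneg
  intro j _
  exact mul_nonneg (hd j) (by positivity)

lemma gamg_lb (x : ℝ) (j : ℕ) : d j * (2 * max (x - m + 1 - j) 0) ≤ gamg m d x := by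
  have hn : x - m + 1 ≤ (max (j+1) ⌈x - m + 1⌉₊ : ℕ) := by
    calc x - m + 1 ≤ (⌈x - m + 1⌉₊ : ℝ) := Nat.le_ceil _
    _ ≤ _ := by exact_mod_cast Nat.le_max_right (j+1) _
  rw [gamg_eq m d x hn, gamfun]
  apply Finset.single_le_sum (f := fun j => d j * (2 * max (x - m + 1 - j) 0))
  · intro i _
    exact mul_nonneg (hd i) (by positivity)
  · exact Finset.mem_range.mpr (lt_of_lt_of_le (Nat.lt_succ_self j) (Nat.le_max_left _ _))

lemma gfun_mono : Monotone (gfun m d) := by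
  intro x y hxy
  have hn : x - m + 1 ≤ (⌈y - m + 1⌉₊ : ℝ) := le_trans (by linarith) (Nat.le_ceil _)
  rw [gfun_eq m d x hn, gfun, Gfun, Gfun]
  apply Finset.sum_le_sum
  intro j _
  apply mul_le_mul_of_nonneg_left _ (hd j)
  exact sqmax_mono (by linarith : x - m + 1 - j ≤ y - m + 1 - j)


omit hd in
lemma gfun_continuous : Continuous (gfun m d) := (gfun_contDiff m d).continuous

omit hd in
lemma expg_continuous : Continuous (fun t => Real.exp (gfun m d t)) :=
  Real.continuous_exp.comp (gfun_contDiff m d).continuous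

def betafun (x : ℝ) : ℝ := ∫ t in (0:ℝ)..x, Real.exp (gfun m d t)

omit hd in
lemma betafun_hasDerivAt (x : ℝ) :
    HasDerivAt (betafun m d) (Real.exp (gfun m d x)) x :=
  ((expg_continuous m d).integral_hasStrictDerivAt 0 x).hasDerivAt

omit hd in
lemma betafun_deriv : deriv (betafun m d) = fun x => Real.exp (gfun m d x) :=
  funext fun x => (betafun_hasDerivAt m d x).deriv

omit hd in
lemma betafun_contDiff : ContDiff ℝ 2 (betafun m d) := by
  rw [show (2 : WithTop ℕ∞) = 1 + 1 from rfl, contDiff_succ_iff_deriv]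
  refine ⟨fun x => (betafun_hasDerivAt m d x).differentiableAt, by simp, ?_⟩
  rw [betafun_deriv]
  exact Real.contDiff_exp.comp (gfun_contDiff m d)

lemma betafun_convexOn : ConvexOn ℝ Set.univ (betafun m d) := by
  apply Monotone.convexOn_univ_of_deriv
    (fun x => (betafun_hasDerivAt m d x).differentiableAt)
  rw [betafun_deriv]
  exact Real.exp_monotone.comp (gfun_mono m d hd)

lemma betafun_deriv_ge_one (x : ℝ) : 1 ≤ deriv (betafun m d) x := by
  rw [betafun_deriv]
  simpa using Real.exp_le_exp.mpr (gfun_nonneg m d hd x)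

omit hd in
lemma betafun_deriv2 (x : ℝ) :
    deriv (deriv (betafun m d)) x = gamg m d x * Real.exp (gfun m d x) := by
  rw [betafun_deriv]
  have h : HasDerivAt (fun y => Real.exp (gfun m d y))
      (Real.exp (gfun m d x) * gamg m d x) x :=
    (Real.hasDerivAt_exp (gfun m d x)).comp x (gfun_hasDerivAt m d x)
  rw [h.deriv]; ring

lemma betafun_lower (x : ℝ) (hx : 1 ≤ x) :
    Real.exp (gfun m d (x - 1)) ≤ betafun m d x := by
  have hi : ∀ a b : ℝ, IntervalIntegrable (fun t => Real.exp (gfun m d t)) MeasureTheory.volume a b :=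
    fun a b => (expg_continuous m d).intervalIntegrable a b
  have hsplit : betafun m d x
      = (∫ t in (0:ℝ)..(x-1), Real.exp (gfun m d t))
        + ∫ t in (x-1)..x, Real.exp (gfun m d t) := by
    rw [betafun, ← intervalIntegral.integral_add_adjacent_intervals (hi 0 (x-1)) (hi (x-1) x)]
  have h1 : (0:ℝ) ≤ ∫ t in (0:ℝ)..(x-1), Real.exp (gfun m d t) := by
    apply intervalIntegral.integral_nonneg (by linarith)
    intro t _
    positivity
  have h2 : Real.exp (gfun m d (x-1)) ≤ ∫ t in (x-1)..x, Real.exp (gfun m d t) := by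
    have hconst : (∫ _ in (x-1)..x, Real.exp (gfun m d (x-1)))
        = Real.exp (gfun m d (x-1)) := by
      rw [intervalIntegral.integral_const, show x - (x-1) = 1 by ring, one_smul]
    calc Real.exp (gfun m d (x-1))
        = ∫ _ in (x-1)..x, Real.exp (gfun m d (x-1)) := hconst.symm
      _ ≤ ∫ t in (x-1)..x, Real.exp (gfun m d t) := by
          apply intervalIntegral.integral_mono_on (by linarith)
            (intervalIntegrable_const) (hi _ _)
          intro t ht
          exact Real.exp_le_exp.mpr (gfun_mono m d hd ht.1)
  linarith

end Beta

section Main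
variable {E : Type*} [NormedAddCommGroup E] [NormedSpace ℝ E] [FiniteDimensional ℝ E]



lemma comp_second_deriv (b : ℝ → ℝ) (f : E → ℝ) (hb : ContDiff ℝ 2 b) (hf : ContDiff ℝ 2 f)
    (x v : E) :
    iteratedFDeriv ℝ 2 (b ∘ f) x ![v, v] =
      deriv (deriv b) (f x) * (fderiv ℝ f x v) ^ 2
        + deriv b (f x) * iteratedFDeriv ℝ 2 f x ![v, v] := by
  have hb1 : Differentiable ℝ b := hb.differentiable (by norm_num)
  have hf1 : Differentiable ℝ f := hf.differentiable (by norm_num)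
  have hdb : ContDiff ℝ 1 (deriv b) := by
    have := (contDiff_succ_iff_deriv.mp (show ContDiff ℝ (1+1) b from hb)).2.2
    exact this
  have hdf : ContDiff ℝ 1 (fderiv ℝ f) := hf.fderiv_right (le_refl _)
  -- first derivative of the composition
  have hF : fderiv ℝ (b ∘ f) = fun y => deriv b (f y) • fderiv ℝ f y := by
    funext y
    exact ((hb1 (f y)).hasDerivAt.comp_hasFDerivAt y (hf1 y).hasFDerivAt).fderiv
  -- second derivative
  set B := fderiv ℝ (fderiv ℝ f) x with hB
  set c' : E →L[ℝ] ℝ := deriv (deriv b) (f x) • fderiv ℝ f x with hc'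
  have hc : HasFDerivAt (fun y => deriv b (f y)) c' x := by
    have h1 : HasDerivAt (deriv b) (deriv (deriv b) (f x)) (f x) :=
      ((hdb.differentiable one_ne_zero) (f x)).hasDerivAt
    exact h1.comp_hasFDerivAt x (hf1 x).hasFDerivAt
  have hg : HasFDerivAt (fderiv ℝ f) B x := ((hdf.differentiable one_ne_zero) x).hasFDerivAt
  have hFd : HasFDerivAt (fun y => deriv b (f y) • fderiv ℝ f y)
      (deriv b (f x) • B + c'.smulRight (fderiv ℝ f x)) x := hc.smul hg
  have key : fderiv ℝ (fderiv ℝ (b ∘ f)) x =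
      deriv b (f x) • B + c'.smulRight (fderiv ℝ f x) := by
    rw [hF]; exact hFd.fderiv
  rw [iteratedFDeriv_two_apply, iteratedFDeriv_two_apply, key]
  simp only [Matrix.cons_val_zero, Matrix.cons_val_one, Matrix.head_cons,
    ContinuousLinearMap.add_apply, ContinuousLinearMap.smul_apply,
    ContinuousLinearMap.smulRight_apply, hc', smul_eq_mul]
  ring



omit [FiniteDimensional ℝ E] in
lemma pairfun_eq (v : E) : (![v, v] : Fin 2 → E) = fun _ => v := by
  funext i; fin_cases i <;> rfl

omit [FiniteDimensional ℝ E] in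
lemma hess_smul (f : E → ℝ) (P : E) (c : ℝ) (v : E) :
    iteratedFDeriv ℝ 2 f P ![c • v, c • v] = c ^ 2 * iteratedFDeriv ℝ 2 f P ![v, v] := by
  rw [pairfun_eq, pairfun_eq]
  have h := (iteratedFDeriv ℝ 2 f P).map_smul_univ (fun _ : Fin 2 => c) (fun _ : Fin 2 => v)
  simpa [smul_eq_mul, sq] using h

lemma exists_K (f : E → ℝ) (hf : ContDiff ℝ 2 f) (p0 : E)
    (hhess0 : ∀ v : E, v ≠ 0 → 0 < iteratedFDeriv ℝ 2 f p0 ![v, v])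
    (hhessperp : ∀ P v : E, P ≠ p0 → v ≠ 0 → fderiv ℝ f P v = 0 →
      0 < iteratedFDeriv ℝ 2 f P ![v, v])
    (S : Set E) (hS : IsCompact S) :
    ∃ K, 0 ≤ K ∧ ∀ P ∈ S, ∀ v : E, v ≠ 0 →
      0 < K * (fderiv ℝ f P v) ^ 2 + iteratedFDeriv ℝ 2 f P ![v, v] := by
  set Q : E × E → ℝ := fun p => iteratedFDeriv ℝ 2 f p.1 ![p.2, p.2] with hQdef
  set L : E × E → ℝ := fun p => fderiv ℝ f p.1 p.2 with hLdef
  have hQc : Continuous Q := by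
    have h1 : Continuous fun p : E × E => iteratedFDeriv ℝ 2 f p.1 :=
      (hf.continuous_iteratedFDeriv le_rfl).comp continuous_fst
    have h2 : Continuous fun p : E × E => (![p.2, p.2] : Fin 2 → E) := by
      apply continuous_pi
      intro i; fin_cases i <;> exact continuous_snd
    exact continuous_eval.comp (h1.prodMk h2)
  have hLc : Continuous L := by
    have h1 : Continuous fun p : E × E => fderiv ℝ f p.1 :=
      (hf.continuous_fderiv (by norm_num)).comp continuous_fst
    exact h1.clm_apply continuous_snd
  -- the "bad" compact set
  set A : Set (E × E) := S ×ˢ Metric.sphere (0:E) 1 with hAdef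
  have hA : IsCompact A := hS.prod (isCompact_sphere 0 1)
  set T : Set (E × E) := A ∩ {p | Q p ≤ 0} with hTdef
  have hT : IsCompact T := hA.inter_right (isClosed_le hQc continuous_const)
  have hLpos : ∀ p ∈ T, 0 < (L p) ^ 2 := by
    rintro ⟨P, v⟩ ⟨⟨hPS, hv⟩, hQle⟩
    have hv1 : ‖v‖ = 1 := by simpa using hv
    have hvne : v ≠ 0 := by
      intro h; rw [h] at hv1; simp at hv1
    have hLne : L (P, v) ≠ 0 := by
      intro h0
      rcases eq_or_ne P p0 with rfl | hP
      · exact absurd hQle (not_le.mpr (hhess0 v hvne))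
      · exact absurd hQle (not_le.mpr (hhessperp P v hP hvne h0))
    positivity
  -- main claim for unit vectors
  have main : ∃ K, 0 ≤ K ∧ ∀ p ∈ A, 0 < K * (L p) ^ 2 + Q p := by
    rcases T.eq_empty_or_nonempty with hTe | hTne
    · refine ⟨0, le_rfl, fun p hp => ?_⟩
      have : p ∉ T := by rw [hTe]; exact Set.notMem_empty p
      have hQp : 0 < Q p := by
        by_contra h
        exact this ⟨hp, not_lt.mp h⟩
      simpa using hQp
    · obtain ⟨pa, hpaT, hpa⟩ := hT.exists_isMinOn hTne (hLc.pow 2).continuousOn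
      obtain ⟨pb, hpbT, hpb⟩ := hT.exists_isMinOn hTne hQc.continuousOn
      set a := (L pa) ^ 2 with hadef
      set b := Q pb with hbdef
      have ha : 0 < a := hLpos pa hpaT
      refine ⟨max 0 ((1 - b)/a), le_max_left _ _, ?_⟩
      intro p hp
      by_cases hpT : p ∈ T
      · have hL2 : a ≤ (L p) ^ 2 := hpa hpT
        have hQb : b ≤ Q p := hpb hpT
        rcases le_or_gt 0 ((1-b)/a) with h | h
        · have hK : max 0 ((1-b)/a) = (1-b)/a := max_eq_right h
          rw [hK]
          have h1 : (1-b)/a * a ≤ (1-b)/a * (L p)^2 := by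
            apply mul_le_mul_of_nonneg_left hL2 h
          have h2 : (1-b)/a * a = 1 - b := by field_simp
          nlinarith
        · have hb1 : 1 < b := by
            by_contra hc
            push_neg at hc
            have : 0 ≤ (1-b)/a := div_nonneg (by linarith) ha.le
            linarith
          have hK : (0:ℝ) ≤ max 0 ((1 - b)/a) := le_max_left _ _
          nlinarith [sq_nonneg (L p)]
      · have hQp : 0 < Q p := by
          by_contra h
          exact hpT ⟨hp, not_lt.mp h⟩
        have hK : (0:ℝ) ≤ max 0 ((1 - b)/a) := le_max_left _ _
        nlinarith [sq_nonneg (L p)]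
  -- extend to all nonzero vectors by homogeneity
  obtain ⟨K, hK0, hK⟩ := main
  refine ⟨K, hK0, fun P hP v hv => ?_⟩
  set c := ‖v‖ with hcdef
  have hc : 0 < c := norm_pos_iff.mpr hv
  set u := c⁻¹ • v with hudef
  have hu1 : ‖u‖ = 1 := by
    rw [hudef, norm_smul]
    simp only [norm_inv, Real.norm_eq_abs, abs_of_pos hc]
    exact inv_mul_cancel₀ hc.ne'
  have hvu : v = c • u := by
    rw [hudef, smul_smul, mul_inv_cancel₀ hc.ne', one_smul]
  have hmem : (P, u) ∈ A := ⟨hP, by simpa using hu1⟩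
  have hkey := hK (P, u) hmem
  have hQs : iteratedFDeriv ℝ 2 f P ![v, v] = c^2 * Q (P, u) := by
    rw [hvu]; exact hess_smul f P c u
  have hLs : fderiv ℝ f P v = c * L (P, u) := by
    rw [hvu]; simp [hLdef]
  rw [hQs, hLs]
  have : K * (c * L (P, u))^2 + c^2 * Q (P,u) = c^2 * (K * (L (P,u))^2 + Q (P,u)) := by ring
  rw [this]
  positivity

end Main

/-- From quasi-convex to convex Hamiltonians: if each `H i : ℝ^{d+1} → ℝ` is
quasiconvex, coercive, C², attains its minimum at a unique point `P0 i` where the Hessian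
is positive definite, has nonvanishing gradient away from `P0 i`, and has positive definite
Hessian on the orthogonal of the gradient away from `P0 i`, then there exist `δ > 0` and a
convex C² function `β : ℝ → ℝ` with `β' ≥ δ` such that each `β ∘ H i` is C² with everywhere
positive definite Hessian and superlinear. -/


theorem quasiconvex_to_convex_reparametrization (d N : ℕ) (hN : 1 ≤ N)
    (H : Fin N → EuclideanSpace ℝ (Fin (d + 1)) → ℝ)
    (hqc : ∀ i (lam : ℝ), Convex ℝ {P : EuclideanSpace ℝ (Fin (d + 1)) | H i P ≤ lam})
    (hcoer : ∀ i, ∀ M : ℝ, ∃ R : ℝ, ∀ P : EuclideanSpace ℝ (Fin (d + 1)),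
      R ≤ ‖P‖ → M ≤ H i P)
    (hC2 : ∀ i, ContDiff ℝ 2 (H i))
    (P0 : Fin N → EuclideanSpace ℝ (Fin (d + 1)))
    (hmin : ∀ i, (∀ P, H i (P0 i) ≤ H i P) ∧
      ∀ P, (∀ Q, H i P ≤ H i Q) → P = P0 i)
    (hhess0 : ∀ i (v : EuclideanSpace ℝ (Fin (d + 1))), v ≠ 0 →
      0 < iteratedFDeriv ℝ 2 (H i) (P0 i) ![v, v])
    (hgrad : ∀ i (P : EuclideanSpace ℝ (Fin (d + 1))), P ≠ P0 i → fderiv ℝ (H i) P ≠ 0)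
    (hhessperp : ∀ i (P v : EuclideanSpace ℝ (Fin (d + 1))), P ≠ P0 i → v ≠ 0 →
      fderiv ℝ (H i) P v = 0 → 0 < iteratedFDeriv ℝ 2 (H i) P ![v, v]) :
    ∃ δ : ℝ, 0 < δ ∧ ∃ β : ℝ → ℝ,
      ConvexOn ℝ Set.univ β ∧ ContDiff ℝ 2 β ∧ (∀ lam : ℝ, δ ≤ deriv β lam) ∧
      ∀ i, ContDiff ℝ 2 (β ∘ H i) ∧
        (∀ (P v : EuclideanSpace ℝ (Fin (d + 1))), v ≠ 0 →
          0 < iteratedFDeriv ℝ 2 (β ∘ H i) P ![v, v]) ∧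
        (∀ M : ℝ, ∃ R : ℝ, ∀ P : EuclideanSpace ℝ (Fin (d + 1)),
          R ≤ ‖P‖ → M * ‖P‖ ≤ (β ∘ H i) P) := by
  haveI : Nonempty (Fin N) := ⟨⟨0, hN⟩⟩
  have huniv : (Finset.univ : Finset (Fin N)).Nonempty := Finset.univ_nonempty
  -- the global minimum value
  set m : ℝ := Finset.univ.inf' huniv (fun i => H i (P0 i)) with hmdef
  have hm : ∀ i (P : EuclideanSpace ℝ (Fin (d + 1))), m ≤ H i P := fun i P =>
    le_trans (Finset.inf'_le _ (Finset.mem_univ i)) ((hmin i).1 P)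
  -- sublevel sets are compact
  have hsub : ∀ (i : Fin N) (c : ℝ), IsCompact {P : EuclideanSpace ℝ (Fin (d + 1)) | H i P ≤ c} := by
    intro i c
    obtain ⟨R, hR⟩ := hcoer i (c + 1)
    apply Metric.isCompact_of_isClosed_isBounded
    · exact isClosed_le (hC2 i).continuous continuous_const
    · apply Metric.isBounded_closedBall (x := (0:EuclideanSpace ℝ (Fin (d + 1)))) (r := max R 0) |>.subset
      intro P hP
      simp only [Set.mem_setOf_eq] at hP
      simp only [Metric.mem_closedBall, dist_zero_right]
      by_contra hc
      push_neg at hc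
      have : R ≤ ‖P‖ := le_trans (le_max_left _ _) hc.le
      linarith [hR P this]
  -- compactness constants
  have hKex : ∀ (i : Fin N) (n : ℕ), ∃ K, 0 ≤ K ∧ ∀ P ∈ {P : EuclideanSpace ℝ (Fin (d + 1)) | H i P ≤ m + n},
      ∀ v : EuclideanSpace ℝ (Fin (d + 1)), v ≠ 0 →
      0 < K * (fderiv ℝ (H i) P v) ^ 2 + iteratedFDeriv ℝ 2 (H i) P ![v, v] := by
    intro i n
    exact exists_K (H i) (hC2 i) (P0 i) (hhess0 i) (hhessperp i) _ (hsub i (m + n))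
  choose K hK0 hK using hKex
  set C : ℕ → ℝ := fun n => Finset.univ.sup' huniv (fun i => K i n) with hCdef
  have hC : ∀ (n : ℕ) (i : Fin N) (P : EuclideanSpace ℝ (Fin (d + 1))), H i P ≤ m + n → ∀ v : EuclideanSpace ℝ (Fin (d + 1)), v ≠ 0 →
      0 < C n * (fderiv ℝ (H i) P v) ^ 2 + iteratedFDeriv ℝ 2 (H i) P ![v, v] := by
    intro n i P hP v hv
    have h1 := hK i n P hP v hv
    have h2 : K i n ≤ C n := Finset.le_sup' (fun j => K j n) (Finset.mem_univ i)
    nlinarith [sq_nonneg (fderiv ℝ (H i) P v)]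
  -- radius bounds
  have hrhoex : ∀ n : ℕ, ∃ ρ : ℝ, 0 ≤ ρ ∧ ∀ (i : Fin N) (P : EuclideanSpace ℝ (Fin (d + 1))),
      H i P ≤ m + n → ‖P‖ ≤ ρ := by
    intro n
    have : ∀ i : Fin N, ∃ R : ℝ, ∀ P : EuclideanSpace ℝ (Fin (d + 1)), R ≤ ‖P‖ → m + n + 1 ≤ H i P := fun i =>
      hcoer i (m + n + 1)
    choose R hR using this
    refine ⟨max 0 (Finset.univ.sup' huniv R), le_max_left _ _, fun i P hP => ?_⟩
    by_contra hc
    push_neg at hc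
    have : R i ≤ ‖P‖ := by
      calc R i ≤ Finset.univ.sup' huniv R := Finset.le_sup' _ (Finset.mem_univ i)
      _ ≤ max 0 (Finset.univ.sup' huniv R) := le_max_right _ _
      _ ≤ ‖P‖ := hc.le
    linarith [hR i P this]
  choose ρ hρ0 hρ using hrhoex
  -- the coefficient sequence
  set dcoef : ℕ → ℝ :=
    fun j => max (max (C (j+1) / 2) (Real.log ((j+1) * ρ (j+2) + 1))) 0 with hdcoefdef
  have hd : ∀ j, 0 ≤ dcoef j := fun j => le_max_right _ _
  have hd1 : ∀ j, C (j+1) ≤ 2 * dcoef j := by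
    intro j
    have : C (j+1) / 2 ≤ dcoef j := le_trans (le_max_left _ _) (le_max_left _ _)
    linarith
  have hd2 : ∀ j, Real.log ((j+1) * ρ (j+2) + 1) ≤ dcoef j := fun j =>
    le_trans (le_max_right _ _) (le_max_left _ _)
  -- the convex reparametrization
  refine ⟨1, one_pos, betafun m dcoef, betafun_convexOn m dcoef hd,
    betafun_contDiff m dcoef, betafun_deriv_ge_one m dcoef hd, ?_⟩
  intro i
  refine ⟨(betafun_contDiff m dcoef).comp (hC2 i), ?_, ?_⟩
  · -- positive definite Hessian
    intro P v hv
    set lam := H i P with hlam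
    have hlm : 0 ≤ lam - m := by linarith [hm i P]
    rw [comp_second_deriv (betafun m dcoef) (H i) (betafun_contDiff m dcoef) (hC2 i) P v]
    rw [betafun_deriv2, betafun_deriv]
    set L := fderiv ℝ (H i) P v with hL
    set Qi := iteratedFDeriv ℝ 2 (H i) P ![v, v] with hQi
    set n : ℕ := ⌊lam - m⌋₊ + 1 with hn
    have hle : H i P ≤ m + n := by
      have := Nat.lt_floor_add_one (lam - m)
      push_cast [hn]
      push_cast at this
      linarith
    have hpos := hC n i P hle v hv
    have hgam : C n ≤ gamg m dcoef lam := by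
      have hlb := gamg_lb m dcoef hd lam ⌊lam - m⌋₊
      have hfl : (⌊lam - m⌋₊ : ℝ) ≤ lam - m := Nat.floor_le hlm
      have h1 : (1:ℝ) ≤ lam - m + 1 - ⌊lam - m⌋₊ := by linarith
      have h1' : (1:ℝ) ≤ max (lam - m + 1 - ⌊lam - m⌋₊) 0 := le_trans h1 (le_max_left _ _)
      have : 2 * dcoef ⌊lam - m⌋₊ ≤ dcoef ⌊lam - m⌋₊ * (2 * max (lam - m + 1 - ⌊lam - m⌋₊) 0) := by
        nlinarith [hd ⌊lam - m⌋₊]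
      calc C n ≤ 2 * dcoef ⌊lam - m⌋₊ := by rw [hn]; exact hd1 _
        _ ≤ dcoef ⌊lam - m⌋₊ * (2 * max (lam - m + 1 - ⌊lam - m⌋₊) 0) := this
        _ ≤ gamg m dcoef lam := hlb
    have hexp : 0 < Real.exp (gfun m dcoef lam) := Real.exp_pos _
    have hfinal : 0 < gamg m dcoef lam * L ^ 2 + Qi := by
      nlinarith [sq_nonneg L]
    nlinarith
  · -- superlinearity
    intro M
    set n : ℕ := max 1 ⌈M⌉₊ with hn
    obtain ⟨R, hR⟩ := hcoer i (max (m + n) 1)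
    refine ⟨R, fun P hP => ?_⟩
    simp only [Function.comp_apply]
    have hlam := hR P hP
    set lam := H i P with hlamdef
    have hlam1 : 1 ≤ lam := le_trans (le_max_right _ _) hlam
    have hlamn : m + n ≤ lam := le_trans (le_max_left _ _) hlam
    have hlm : 0 ≤ lam - m := by
      have : (0:ℝ) ≤ n := Nat.cast_nonneg n
      linarith
    set k : ℕ := ⌊lam - m⌋₊ with hk
    have hkn : n ≤ k := Nat.le_floor (by push_cast; linarith)
    have hk1 : 1 ≤ k := le_trans (le_max_left _ _) hkn
    obtain ⟨k', hk'⟩ : ∃ k', k = k' + 1 := ⟨k - 1, (Nat.succ_pred_eq_of_pos hk1).symm⟩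
    have hPsub : H i P ≤ m + ((k + 1 : ℕ) : ℝ) := by
      have := Nat.lt_floor_add_one (lam - m)
      push_cast
      push_cast at this
      linarith
    have hPnorm : ‖P‖ ≤ ρ (k + 1) := hρ (k+1) i P hPsub
    -- lower bound on betafun
    have hlower := betafun_lower m dcoef hd lam hlam1
    have hglb : Real.log ((k:ℝ) * ρ (k+1) + 1) ≤ gfun m dcoef (lam - 1) := by
      have hlb := gfun_lb m dcoef hd (lam - 1) k'
      have hfl : (k:ℝ) ≤ lam - m := Nat.floor_le hlm
      have harg : (1:ℝ) ≤ lam - 1 - m + 1 - k' := by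
        have : ((k':ℝ) + 1) ≤ lam - m := by
          rw [hk'] at hfl; push_cast at hfl; linarith
        linarith
      have harg' : (1:ℝ) ≤ max (lam - 1 - m + 1 - k') 0 := le_trans harg (le_max_left _ _)
      have hsq : 1 ≤ max (lam - 1 - m + 1 - k') 0 ^ 2 := by nlinarith [harg']
      have h1 : dcoef k' ≤ dcoef k' * max (lam - 1 - m + 1 - k') 0 ^ 2 := by
        nlinarith [hd k', hsq]
      have h2 : Real.log ((k:ℝ) * ρ (k+1) + 1) ≤ dcoef k' := by
        rw [hk']
        push_cast
        exact hd2 k'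
      linarith
    have hexp : (k:ℝ) * ρ (k+1) + 1 ≤ Real.exp (gfun m dcoef (lam - 1)) := by
      have hpos : (0:ℝ) < (k:ℝ) * ρ (k+1) + 1 := by
        have : (0:ℝ) ≤ (k:ℝ) * ρ (k+1) := mul_nonneg (Nat.cast_nonneg k) (hρ0 _)
        linarith
      calc (k:ℝ) * ρ (k+1) + 1 = Real.exp (Real.log ((k:ℝ) * ρ (k+1) + 1)) :=
            (Real.exp_log hpos).symm
        _ ≤ Real.exp (gfun m dcoef (lam - 1)) := Real.exp_le_exp.mpr hglb
    have hMP : M * ‖P‖ ≤ (k:ℝ) * ρ (k+1) := by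
      rcases le_or_gt M 0 with hM | hM
      · have : M * ‖P‖ ≤ 0 := mul_nonpos_of_nonpos_of_nonneg hM (norm_nonneg P)
        have : (0:ℝ) ≤ (k:ℝ) * ρ (k+1) := mul_nonneg (Nat.cast_nonneg k) (hρ0 _)
        linarith
      · have hMn : M ≤ (n:ℝ) := by
          calc M ≤ (⌈M⌉₊ : ℝ) := Nat.le_ceil M
            _ ≤ (n:ℝ) := by exact_mod_cast Nat.le_max_right 1 ⌈M⌉₊
        have hMk : M ≤ (k:ℝ) := le_trans hMn (by exact_mod_cast hkn)
        exact mul_le_mul hMk hPnorm (norm_nonneg P) (Nat.cast_nonneg k)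
    calc M * ‖P‖ ≤ (k:ℝ) * ρ (k+1) := hMP
      _ ≤ (k:ℝ) * ρ (k+1) + 1 := by linarith
      _ ≤ Real.exp (gfun m dcoef (lam - 1)) := hexp
      _ ≤ betafun m dcoef lam := hlower
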